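/- Let A ∈ ℝ^{n×n} with spectral norm ‖A‖ ≤ κ for some κ ∈ (0,1), let Q ∈ ℝ^{n×n} be positive semidefinite, let P = Σ_{t≥0} (Aᵗ)ᵀ Q Aᵗ, let Σ ∈ ℝ^{n×n} be positive definite, and let C > 0 satisfy trace(PΣ) ≤ C. Fix x₀ ∈ ℝ^n and ε′ > 0 with C·‖x₀‖²/(λ_min(Σ)·ε′) ≥ 1. If the integer T satisfies T ≥ (1/(2(1−κ))) · log( C·‖x₀‖² / (λ_min(Σ)·ε′) ), then Σ_{t≥T} x₀ᵀ (Aᵗ)ᵀ Q Aᵗ x₀ ≤ ε′. -/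

import Mathlib

open Matrix
open scoped Matrix.Norms.L2Operator

lemma dot_mulVec_eq {m n : ℕ} (M : Matrix (Fin m) (Fin n) ℝ) (u : Fin m → ℝ) (v : Fin n → ℝ) :
    u ⬝ᵥ (M *ᵥ v) = (Mᵀ *ᵥ u) ⬝ᵥ v := by
  rw [Matrix.dotProduct_mulVec, ← Matrix.vecMul_transpose, Matrix.transpose_transpose]

lemma quad_lower {n : ℕ} (S : Matrix (Fin n) (Fin n) ℝ) (hS : S.IsHermitian) (v : Fin n → ℝ) :
    (⨅ i, hS.eigenvalues i) * (v ⬝ᵥ v) ≤ v ⬝ᵥ S *ᵥ v := by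
  rcases Nat.eq_zero_or_pos n with h0 | hn
  · subst h0; simp [dotProduct, iInf_of_empty]
  have hne : Nonempty (Fin n) := Fin.pos_iff_nonempty.mp hn
  set U : Matrix (Fin n) (Fin n) ℝ := (hS.eigenvectorUnitary : Matrix (Fin n) (Fin n) ℝ) with hU
  have hsU : star U = Uᵀ := by
    simp [Matrix.star_eq_conjTranspose, Matrix.conjTranspose_eq_transpose_of_trivial]
  set w : Fin n → ℝ := Uᵀ *ᵥ v with hw
  have hUU : U * Uᵀ = 1 := by
    rw [← hsU]; exact (Matrix.mem_unitaryGroup_iff).mp hS.eigenvectorUnitary.2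
  have hvv : w ⬝ᵥ w = v ⬝ᵥ v := by
    rw [hw, dot_mulVec_eq, Matrix.transpose_transpose, Matrix.mulVec_mulVec, hUU, Matrix.one_mulVec]
  have hquad : v ⬝ᵥ S *ᵥ v = ∑ i, hS.eigenvalues i * (w i)^2 := by
    conv_lhs => rw [hS.spectral_theorem, Unitary.conjStarAlgAut_apply, hsU]
    rw [← Matrix.mulVec_mulVec, ← Matrix.mulVec_mulVec, dot_mulVec_eq, ← hw]
    simp only [Matrix.mulVec_diagonal, dotProduct, Function.comp, RCLike.ofReal_real_eq_id, id_eq, sq]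
    exact Finset.sum_congr rfl fun i _ => by ring
  rw [hquad, hvv.symm]
  have hbdd : BddBelow (Set.range hS.eigenvalues) := Set.Finite.bddBelow (Set.finite_range _)
  have : (⨅ i, hS.eigenvalues i) * (w ⬝ᵥ w) = ∑ i, (⨅ j, hS.eigenvalues j) * (w i)^2 := by
    simp [dotProduct, Finset.mul_sum, sq]
  rw [this]
  exact Finset.sum_le_sum fun i _ => mul_le_mul_of_nonneg_right (ciInf_le hbdd i) (sq_nonneg _)

lemma frob_eq {n : ℕ} (B : Matrix (Fin n) (Fin n) ℝ) (hB : Bᵀ = B) :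
    (B * B).trace = ∑ i, (B i) ⬝ᵥ (B i) := by
  simp only [Matrix.trace, Matrix.diag, Matrix.mul_apply, dotProduct]
  refine Finset.sum_congr rfl fun i _ => Finset.sum_congr rfl fun j _ => ?_
  rw [show B j i = Bᵀ i j from rfl, hB]

open scoped MatrixOrder in
lemma quad_upper {n : ℕ} (P : Matrix (Fin n) (Fin n) ℝ) (hP : P.PosSemidef) (v : Fin n → ℝ) :
    v ⬝ᵥ P *ᵥ v ≤ P.trace * (v ⬝ᵥ v) := by
  set B := CFC.sqrt P with hBdef
  have hBB : B * B = P := CFC.sqrt_mul_sqrt_self P hP.nonneg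
  have hBsym : Bᵀ = B := by
    have := (Matrix.nonneg_iff_posSemidef.mp (CFC.sqrt_nonneg P)).1
    rwa [Matrix.IsHermitian, Matrix.conjTranspose_eq_transpose_of_trivial] at this
  have h1 : v ⬝ᵥ P *ᵥ v = (B *ᵥ v) ⬝ᵥ (B *ᵥ v) := by
    rw [← hBB, ← Matrix.mulVec_mulVec, dot_mulVec_eq, hBsym]
  rw [h1, ← hBB, frob_eq B hBsym]
  have h2 : (B *ᵥ v) ⬝ᵥ (B *ᵥ v) = ∑ i, ((B i) ⬝ᵥ v)^2 := by
    simp [dotProduct, Matrix.mulVec, sq]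
  rw [h2, Finset.sum_mul]
  refine Finset.sum_le_sum fun i _ => ?_
  have := Finset.sum_mul_sq_le_sq_mul_sq Finset.univ (B i) v
  calc (B i ⬝ᵥ v)^2 ≤ (∑ j, (B i j)^2) * (∑ j, (v j)^2) := by
        simpa [dotProduct] using this
    _ = (B i ⬝ᵥ B i) * (v ⬝ᵥ v) := by simp [dotProduct, sq]

open scoped MatrixOrder in
lemma trace_lower {n : ℕ} (P Sig : Matrix (Fin n) (Fin n) ℝ) (hP : P.PosSemidef)
    (hSig : Sig.IsHermitian) :
    (⨅ i, hSig.eigenvalues i) * P.trace ≤ (P * Sig).trace := by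
  set B := CFC.sqrt P with hBdef
  have hBB : B * B = P := CFC.sqrt_mul_sqrt_self P hP.nonneg
  have hBsym : Bᵀ = B := by
    have := (Matrix.nonneg_iff_posSemidef.mp (CFC.sqrt_nonneg P)).1
    rwa [Matrix.IsHermitian, Matrix.conjTranspose_eq_transpose_of_trivial] at this
  have h1 : (P * Sig).trace = (B * Sig * B).trace := by
    rw [← hBB, mul_assoc, Matrix.trace_mul_comm]
  have h2 : (B * Sig * B).trace = ∑ i, (B i) ⬝ᵥ Sig *ᵥ (B i) := by
    simp only [Matrix.trace, Matrix.diag, Matrix.mul_apply, dotProduct, Matrix.mulVec,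
      Finset.sum_mul, Finset.mul_sum]
    refine Finset.sum_congr rfl fun i _ => ?_
    rw [Finset.sum_comm]
    refine Finset.sum_congr rfl fun j _ => Finset.sum_congr rfl fun k _ => ?_
    rw [show B k i = Bᵀ i k from rfl, hBsym]; ring
  rw [h1, h2, ← hBB, frob_eq B hBsym, Finset.mul_sum]
  exact Finset.sum_le_sum fun i _ => quad_lower Sig hSig (B i)

section analytic
variable {n : ℕ} (A Q : Matrix (Fin n) (Fin n) ℝ)

lemma norm_one_le_matrix : ‖(1 : Matrix (Fin n) (Fin n) ℝ)‖ ≤ 1 := by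
  have h := Matrix.l2_opNorm_conjTranspose_mul_self (1 : Matrix (Fin n) (Fin n) ℝ)
  rw [Matrix.conjTranspose_one, mul_one] at h
  nlinarith [norm_nonneg (1 : Matrix (Fin n) (Fin n) ℝ)]

lemma norm_pow_le_matrix {κ : ℝ} (hκ0 : 0 ≤ κ) (hA : ‖A‖ ≤ κ) (t : ℕ) : ‖A ^ t‖ ≤ κ ^ t := by
  induction t with
  | zero => simpa using norm_one_le_matrix
  | succ t ih =>
    calc ‖A ^ (t+1)‖ = ‖A ^ t * A‖ := by rw [pow_succ]
      _ ≤ ‖A ^ t‖ * ‖A‖ := norm_mul_le _ _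
      _ ≤ κ ^ t * κ := by
          apply mul_le_mul ih hA (norm_nonneg _) (pow_nonneg hκ0 t)
      _ = κ ^ (t+1) := by rw [pow_succ]

lemma norm_transpose_matrix (M : Matrix (Fin n) (Fin n) ℝ) : ‖Mᵀ‖ = ‖M‖ := by
  rw [← Matrix.conjTranspose_eq_transpose_of_trivial, Matrix.l2_opNorm_conjTranspose]

lemma summable_series {κ : ℝ} (hκ0 : 0 ≤ κ) (hκ1 : κ < 1) (hA : ‖A‖ ≤ κ) :
    Summable (fun t : ℕ => (A ^ t)ᵀ * Q * (A ^ t)) := by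
  apply Summable.of_norm_bounded (g := fun t : ℕ => ‖Q‖ * (κ^2)^t)
  · exact (summable_geometric_of_lt_one (by positivity) (by nlinarith)).mul_left _
  · intro t
    calc ‖(A ^ t)ᵀ * Q * (A ^ t)‖ ≤ ‖(A ^ t)ᵀ * Q‖ * ‖A ^ t‖ := norm_mul_le _ _
      _ ≤ ‖(A ^ t)ᵀ‖ * ‖Q‖ * ‖A ^ t‖ := by
          apply mul_le_mul_of_nonneg_right (norm_mul_le _ _) (norm_nonneg _)
      _ = ‖A ^ t‖ * ‖Q‖ * ‖A ^ t‖ := by rw [norm_transpose_matrix]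
      _ ≤ κ^t * ‖Q‖ * κ^t := by
          have h := norm_pow_le_matrix A hκ0 hA t
          have h2 : (0:ℝ) ≤ κ ^ t := pow_nonneg hκ0 t
          have h3 : (0:ℝ) ≤ ‖A ^ t‖ := norm_nonneg _
          have h4 : (0:ℝ) ≤ ‖Q‖ := norm_nonneg _
          exact mul_le_mul (mul_le_mul_of_nonneg_right h h4) h h3 (by positivity)
      _ = ‖Q‖ * (κ^2)^t := by rw [← pow_mul, two_mul, pow_add]; ring

end analytic

section tsum
variable {n : ℕ}

noncomputable def dotCLM (y : Fin n → ℝ) : Matrix (Fin n) (Fin n) ℝ →L[ℝ] ℝ :=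
  LinearMap.toContinuousLinearMap
  { toFun := fun M => y ⬝ᵥ M *ᵥ y
    map_add' := fun M M' => by simp [Matrix.add_mulVec, dotProduct_add]
    map_smul' := fun c M => by simp [Matrix.smul_mulVec, dotProduct_smul] }

@[simp] lemma dotCLM_apply (y : Fin n → ℝ) (M : Matrix (Fin n) (Fin n) ℝ) :
    dotCLM y M = y ⬝ᵥ M *ᵥ y := rfl

noncomputable def transposeCLM : Matrix (Fin n) (Fin n) ℝ →L[ℝ] Matrix (Fin n) (Fin n) ℝ :=
  LinearMap.toContinuousLinearMap
  { toFun := fun M => Mᵀ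
    map_add' := fun M M' => by simp [Matrix.transpose_add]
    map_smul' := fun c M => by simp }

@[simp] lemma transposeCLM_apply (M : Matrix (Fin n) (Fin n) ℝ) :
    transposeCLM M = Mᵀ := rfl

lemma tsum_dot (y : Fin n → ℝ) (N : ℕ → Matrix (Fin n) (Fin n) ℝ) (hN : Summable N) :
    y ⬝ᵥ (∑' t, N t) *ᵥ y = ∑' t, y ⬝ᵥ (N t *ᵥ y) := by
  simpa using (dotCLM y).map_tsum hN

lemma tsum_transpose (N : ℕ → Matrix (Fin n) (Fin n) ℝ) (hN : Summable N) :
    (∑' t, N t)ᵀ = ∑' t, (N t)ᵀ := by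
  simpa using transposeCLM.map_tsum hN

end tsum

lemma term_posSemidef {n : ℕ} (A Q : Matrix (Fin n) (Fin n) ℝ) (hQ : Q.PosSemidef) (t : ℕ) :
    ((A ^ t)ᵀ * Q * (A ^ t)).PosSemidef := by
  have := hQ.conjTranspose_mul_mul_same (A ^ t)
  rwa [Matrix.conjTranspose_eq_transpose_of_trivial] at this

lemma posSemidef_tsum {n : ℕ} (A Q : Matrix (Fin n) (Fin n) ℝ) (hQ : Q.PosSemidef)
    (hsum : Summable (fun t : ℕ => (A ^ t)ᵀ * Q * (A ^ t))) :
    (∑' t : ℕ, (A ^ t)ᵀ * Q * (A ^ t)).PosSemidef := by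
  refine Matrix.PosSemidef.of_dotProduct_mulVec_nonneg ?_ ?_
  · rw [Matrix.IsHermitian, Matrix.conjTranspose_eq_transpose_of_trivial,
      tsum_transpose _ hsum]
    congr 1
    funext t
    have := (term_posSemidef A Q hQ t).1
    rwa [Matrix.IsHermitian, Matrix.conjTranspose_eq_transpose_of_trivial] at this
  · intro x
    rw [star_trivial, tsum_dot x _ hsum]
    refine tsum_nonneg fun t => ?_
    have := (term_posSemidef A Q hQ t).dotProduct_mulVec_nonneg x
    rwa [star_trivial] at this

lemma dot_self_eq_norm_sq {n : ℕ} (v : Fin n → ℝ) :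
    v ⬝ᵥ v = ‖(WithLp.equiv 2 (Fin n → ℝ)).symm v‖ ^ 2 := by
  rw [EuclideanSpace.norm_eq]
  rw [Real.sq_sqrt (by positivity)]
  simp [dotProduct, sq]

lemma norm_mulVec_le {n : ℕ} (M : Matrix (Fin n) (Fin n) ℝ) (v : Fin n → ℝ) :
    ‖(WithLp.equiv 2 (Fin n → ℝ)).symm (M *ᵥ v)‖ ≤
      ‖M‖ * ‖(WithLp.equiv 2 (Fin n → ℝ)).symm v‖ :=
  M.l2_opNorm_mulVec ((WithLp.equiv 2 (Fin n → ℝ)).symm v)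

lemma diag_eq {n : ℕ} (P : Matrix (Fin n) (Fin n) ℝ) (i : Fin n) :
    P i i = Pi.single i 1 ⬝ᵥ P *ᵥ Pi.single i 1 := by
  simp [dotProduct, Matrix.mulVec_single, Pi.single_apply, Finset.sum_ite_eq']

lemma trace_nonneg' {n : ℕ} (P : Matrix (Fin n) (Fin n) ℝ) (hP : P.PosSemidef) :
    0 ≤ P.trace := by
  rw [Matrix.trace]
  refine Finset.sum_nonneg fun i _ => ?_
  rw [Matrix.diag_apply, diag_eq P i]
  simpa using hP.dotProduct_mulVec_nonneg (Pi.single i 1)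


/-- finite-horizon truncation bound, Lemma 6.
If `‖A‖ ≤ κ < 1` (spectral norm), `Q ⪰ 0`, `P = Σ_{t≥0} (Aᵗ)ᵀ Q Aᵗ`, `Σ ≻ 0`,
`trace(PΣ) ≤ C`, and the horizon `T` satisfies
`T ≥ (1/(2(1−κ))) log(C‖x₀‖² / (λ_min(Σ) ε′))` with
`C‖x₀‖²/(λ_min(Σ)ε′) ≥ 1`, then the tail `Σ_{t≥T} x₀ᵀ (Aᵗ)ᵀ Q Aᵗ x₀` is at most `ε′`. -/
theorem stmt_8 {n : ℕ} (A Q Sig : Matrix (Fin n) (Fin n) ℝ) (κ : ℝ)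
    (hκ0 : 0 < κ) (hκ1 : κ < 1) (hA : ‖A‖ ≤ κ) (hQ : Q.PosSemidef)
    (hSig : Sig.PosDef) (C : ℝ) (hC : 0 < C)
    (htr : ((∑' t : ℕ, (A ^ t)ᵀ * Q * (A ^ t)) * Sig).trace ≤ C)
    (x₀ : Fin n → ℝ) (ε' : ℝ) (hε' : 0 < ε')
    (harg : 1 ≤ C * ‖(WithLp.equiv 2 (Fin n → ℝ)).symm x₀‖ ^ 2 /
      ((⨅ i, hSig.1.eigenvalues i) * ε'))
    (T : ℕ)
    (hT : (1 / (2 * (1 - κ))) *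
        Real.log (C * ‖(WithLp.equiv 2 (Fin n → ℝ)).symm x₀‖ ^ 2 /
          ((⨅ i, hSig.1.eigenvalues i) * ε')) ≤ (T : ℝ)) :
    (∑' t : ℕ, x₀ ⬝ᵥ (((A ^ (T + t))ᵀ * Q * (A ^ (T + t))) *ᵥ x₀)) ≤ ε' := by
  set lmin : ℝ := ⨅ i, hSig.1.eigenvalues i with hlmin
  set X : ℝ := ‖(WithLp.equiv 2 (Fin n → ℝ)).symm x₀‖ with hX
  have hX0 : 0 ≤ X := norm_nonneg _
  -- positivity of lmin and X from harg
  have hl : 0 < lmin := by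
    by_contra h
    push_neg at h
    have : lmin * ε' ≤ 0 := mul_nonpos_of_nonpos_of_nonneg h hε'.le
    have h2 : C * X ^ 2 / (lmin * ε') ≤ 0 :=
      div_nonpos_of_nonneg_of_nonpos (by positivity) this
    linarith
  have hXpos : 0 < X := by
    rcases lt_or_eq_of_le hX0 with h | h
    · exact h
    · exfalso
      rw [← h] at harg
      simp at harg
      linarith
  -- summability and P
  have hsum : Summable (fun t : ℕ => (A ^ t)ᵀ * Q * (A ^ t)) :=
    summable_series A Q hκ0.le hκ1 hA
  set P : Matrix (Fin n) (Fin n) ℝ := ∑' t : ℕ, (A ^ t)ᵀ * Q * (A ^ t) with hP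
  have hPsd : P.PosSemidef := posSemidef_tsum A Q hQ hsum
  -- trace bounds
  have htrP : lmin * P.trace ≤ C := le_trans (trace_lower P Sig hPsd hSig.1) htr
  have htrP0 : 0 ≤ P.trace := trace_nonneg' P hPsd
  have htrP' : P.trace ≤ C / lmin := by
    rw [le_div_iff₀ hl]; linarith [htrP]
  -- the vector y
  set y : Fin n → ℝ := A ^ T *ᵥ x₀ with hy
  have hterm : ∀ t : ℕ, x₀ ⬝ᵥ (((A ^ (T + t))ᵀ * Q * (A ^ (T + t))) *ᵥ x₀)
      = y ⬝ᵥ (((A ^ t)ᵀ * Q * (A ^ t)) *ᵥ y) := by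
    intro t
    have hmat : (A ^ (T + t))ᵀ * Q * (A ^ (T + t))
        = (A ^ T)ᵀ * (((A ^ t)ᵀ * Q * (A ^ t)) * (A ^ T)) := by
      rw [add_comm T t, pow_add, Matrix.transpose_mul]
      simp [Matrix.mul_assoc]
    rw [hmat, ← Matrix.mulVec_mulVec, dot_mulVec_eq, Matrix.transpose_transpose,
      ← Matrix.mulVec_mulVec]
  have hLHS : (∑' t : ℕ, x₀ ⬝ᵥ (((A ^ (T + t))ᵀ * Q * (A ^ (T + t))) *ᵥ x₀))
      = y ⬝ᵥ P *ᵥ y := by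
    rw [tsum_dot y _ hsum]
    exact tsum_congr hterm
  rw [hLHS]
  -- norm bound on y
  have hynorm : y ⬝ᵥ y ≤ κ ^ (2 * T) * X ^ 2 := by
    have h1 : ‖(WithLp.equiv 2 (Fin n → ℝ)).symm y‖ ≤ κ ^ T * X := by
      calc ‖(WithLp.equiv 2 (Fin n → ℝ)).symm y‖
          ≤ ‖A ^ T‖ * X := norm_mulVec_le (A ^ T) x₀
        _ ≤ κ ^ T * X :=
            mul_le_mul_of_nonneg_right (norm_pow_le_matrix A hκ0.le hA T) hX0
    rw [dot_self_eq_norm_sq]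
    calc ‖(WithLp.equiv 2 (Fin n → ℝ)).symm y‖ ^ 2 ≤ (κ ^ T * X) ^ 2 := by
          have := norm_nonneg ((WithLp.equiv 2 (Fin n → ℝ)).symm y)
          nlinarith
      _ = κ ^ (2 * T) * X ^ 2 := by rw [mul_pow, ← pow_mul]; ring_nf
  -- log inequality
  have hR : (1:ℝ) ≤ C * X ^ 2 / (lmin * ε') := harg
  have hRpos : (0:ℝ) < C * X ^ 2 / (lmin * ε') := lt_of_lt_of_le one_pos hR
  have hκpow : κ ^ (2 * T) ≤ (lmin * ε') / (C * X ^ 2) := by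
    set R : ℝ := C * X ^ 2 / (lmin * ε') with hRdef
    have hlog : Real.log R ≤ 2 * (1 - κ) * T := by
      have h2 : (0:ℝ) < 2 * (1 - κ) := by linarith
      have := mul_le_mul_of_nonneg_left hT h2.le
      rw [← mul_assoc, mul_one_div, div_self h2.ne', one_mul] at this
      linarith
    have hlogκ : Real.log κ ≤ κ - 1 := Real.log_le_sub_one_of_pos hκ0
    have hexp : κ ^ (2 * T) = Real.exp ((2 * T : ℕ) * Real.log κ) := by
      rw [Real.exp_nat_mul, Real.exp_log hκ0]
    rw [hexp]
    have hmono : ((2 * T : ℕ) : ℝ) * Real.log κ ≤ - Real.log R := by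
      push_cast
      nlinarith [Nat.cast_nonneg (α := ℝ) T]
    calc Real.exp ((2 * T : ℕ) * Real.log κ) ≤ Real.exp (- Real.log R) :=
          Real.exp_le_exp.mpr hmono
      _ = R⁻¹ := by rw [Real.exp_neg, Real.exp_log hRpos]
      _ = (lmin * ε') / (C * X ^ 2) := by
          rw [hRdef, inv_div]
  -- put it together
  calc y ⬝ᵥ P *ᵥ y ≤ P.trace * (y ⬝ᵥ y) := quad_upper P hPsd y
    _ ≤ (C / lmin) * (κ ^ (2 * T) * X ^ 2) := by
        have hyy : 0 ≤ y ⬝ᵥ y := by rw [dot_self_eq_norm_sq]; positivity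
        exact mul_le_mul htrP' hynorm hyy (by positivity)
    _ ≤ (C / lmin) * ((lmin * ε') / (C * X ^ 2) * X ^ 2) := by
        have : (0:ℝ) ≤ C / lmin := by positivity
        have h2 : (0:ℝ) ≤ X ^ 2 := by positivity
        apply mul_le_mul_of_nonneg_left _ this
        exact mul_le_mul_of_nonneg_right hκpow h2
    _ = ε' := by field_simp
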